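/- arXiv:0806.1745 — 2 statements merged into one kernel-verified Lean document; each statement's English description precedes it below -/
import Mathlib

section
/- There exist universal constants A, C > 0 such that the following holds. Let X be a finite, connected, undirected d-regular graph with doubling constant c_X ≥ 2 and Poincaré constant P_X, let D = diam(X) and δ > 0, and let x₁, …, x_M ∈ V be points that are pairwise at distance greater than δD and such that the balls B(x₁, δD), …, B(x_M, δD) cover V. If φ : V → ℝ is a nonzero eigenfunction of the discrete Laplacian Δ with eigenvalue λ ≠ 0 satisfying Σ_{y ∈ B(x_j, δD)} φ(y) = 0 for every j ∈ {1, …, M}, then 1/λ ≤ C · c_X^A · P_X · (δD)². -/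
open Finset

/-- The closed ball of radius `R` (a real number) about `x` in the shortest-path metric
of the graph `G`. -/
noncomputable def gball {V : Type} [Fintype V] (G : SimpleGraph V) (x : V) (R : ℝ) : Finset V :=
  @Finset.filter _ (fun y => (G.dist x y : ℝ) ≤ R) (Classical.decPred _) Finset.univ

/-- The set of neighbors of `x` in `G`. -/
noncomputable def nbrs {V : Type} [Fintype V] (G : SimpleGraph V) (x : V) : Finset V :=
  @Finset.filter _ (fun y => G.Adj x y) (Classical.decPred _) Finset.univ

/-- `|∇f(x)|² = (1/(2d)) ∑_{y ~ x} |f(x) - f(y)|²`. -/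
noncomputable def gradSq {V : Type} [Fintype V] (G : SimpleGraph V) (d : ℕ)
    (f : V → ℝ) (x : V) : ℝ :=
  (1 / (2 * (d : ℝ))) * ∑ y ∈ nbrs G x, (f x - f y) ^ 2

/-- The diameter of the graph `G` in the shortest-path metric. -/
noncomputable def gdiam {V : Type} [Fintype V] (G : SimpleGraph V) : ℕ :=
  Finset.univ.sup fun p : V × V => G.dist p.1 p.2

lemma mem_gball {V : Type} [Fintype V] (G : SimpleGraph V) (x y : V) (R : ℝ) :
    y ∈ gball G x R ↔ (G.dist x y : ℝ) ≤ R := by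
  simp [gball]

lemma gball_mono {V : Type} [Fintype V] (G : SimpleGraph V) (x : V) {R R' : ℝ} (h : R ≤ R') :
    gball G x R ⊆ gball G x R' := by
  intro y hy
  rw [mem_gball] at *
  linarith

lemma nbrs_swap {V : Type} [Fintype V] (G : SimpleGraph V) (F : V → V → ℝ) :
    ∑ v, ∑ y ∈ nbrs G v, F v y = ∑ y, ∑ v ∈ nbrs G y, F v y := by
  simp only [nbrs, Finset.sum_filter]
  rw [Finset.sum_comm]
  refine Finset.sum_congr rfl fun y _ => Finset.sum_congr rfl fun v _ => ?_
  by_cases h : G.Adj v y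
  · simp [h, h.symm]
  · have h2 : ¬ G.Adj y v := fun h' => h h'.symm
    simp [h, h2]

lemma energy_eq {V : Type} [Fintype V] (G : SimpleGraph V) (d : ℕ) (hd : 1 ≤ d)
    (hreg : ∀ x : V, (nbrs G x).card = d) (φ : V → ℝ) (lam : ℝ)
    (heig : ∀ v : V, φ v - (1 / (d : ℝ)) * ∑ y ∈ nbrs G v, φ y = lam * φ v) :
    ∑ v, gradSq G d φ v = lam * ∑ v, φ v ^ 2 := by
  have hd0 : (d : ℝ) ≠ 0 := by positivity
  set T := ∑ v, φ v ^ 2 with hT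
  have hS1 : ∑ v, ∑ y ∈ nbrs G v, φ v ^ 2 = (d : ℝ) * T := by
    rw [hT, Finset.mul_sum]
    refine Finset.sum_congr rfl fun v _ => ?_
    rw [Finset.sum_const, hreg, nsmul_eq_mul]
  have hS2 : ∑ v, ∑ y ∈ nbrs G v, φ y ^ 2 = (d : ℝ) * T := by
    rw [nbrs_swap G (fun v y => φ y ^ 2)]
    rw [hT, Finset.mul_sum]
    refine Finset.sum_congr rfl fun v _ => ?_
    rw [Finset.sum_const, hreg, nsmul_eq_mul]
  have hS3 : ∑ v, ∑ y ∈ nbrs G v, φ v * φ y = (d : ℝ) * (T - lam * T) := by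
    have : ∀ v : V, ∑ y ∈ nbrs G v, φ v * φ y = (d:ℝ) * (φ v ^ 2 - lam * φ v ^ 2) := by
      intro v
      have h := heig v
      have h2 : ∑ y ∈ nbrs G v, φ y = (d:ℝ) * (φ v - lam * φ v) := by
        field_simp at h ⊢
        linarith
      rw [← Finset.mul_sum, h2]
      ring
    rw [Finset.sum_congr rfl fun v _ => this v, ← Finset.mul_sum, hT,
      Finset.sum_sub_distrib, ← Finset.mul_sum]
  have per : ∀ v, ∑ y ∈ nbrs G v, (φ v - φ y) ^ 2
      = (∑ y ∈ nbrs G v, φ v ^ 2) + (∑ y ∈ nbrs G v, φ y ^ 2)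
        - 2 * ∑ y ∈ nbrs G v, φ v * φ y := by
    intro v
    rw [Finset.mul_sum, ← Finset.sum_add_distrib, ← Finset.sum_sub_distrib]
    exact Finset.sum_congr rfl fun y _ => by ring
  have expand : ∑ v, gradSq G d φ v
      = (1/(2*(d:ℝ))) * ((d:ℝ)*T + (d:ℝ)*T - 2*((d:ℝ)*(T - lam*T))) := by
    unfold gradSq
    rw [← Finset.mul_sum]
    congr 1
    have hsum : ∑ v, ∑ y ∈ nbrs G v, (φ v - φ y) ^ 2
        = (∑ v, ∑ y ∈ nbrs G v, φ v ^ 2) + (∑ v, ∑ y ∈ nbrs G v, φ y ^ 2)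
          - 2 * ∑ v, ∑ y ∈ nbrs G v, φ v * φ y := by
      rw [Finset.mul_sum, ← Finset.sum_add_distrib, ← Finset.sum_sub_distrib]
      exact Finset.sum_congr rfl fun v _ => per v
    rw [hsum, hS1, hS2, hS3]
  rw [expand]
  field_simp
  ring

open scoped Classical in
lemma gradSq_nonneg {V : Type} [Fintype V] (G : SimpleGraph V) (d : ℕ) (f : V → ℝ) (x : V) :
    0 ≤ gradSq G d f x := by
  unfold gradSq
  apply mul_nonneg
  · positivity
  · exact Finset.sum_nonneg fun y _ => sq_nonneg _

open scoped Classical in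
lemma double_count {V : Type} [Fintype V] (G : SimpleGraph V) (M : ℕ) (x : Fin M → V)
    (R : ℝ) (f : V → ℝ) :
    ∑ j, ∑ y ∈ gball G (x j) R, f y
      = ∑ y, ((Finset.univ.filter fun j => y ∈ gball G (x j) R).card : ℝ) * f y := by
  have h1 : ∀ j : Fin M, ∑ y ∈ gball G (x j) R, f y
      = ∑ y, if y ∈ gball G (x j) R then f y else 0 := by
    intro j
    rw [Finset.sum_ite_mem, Finset.univ_inter]
  rw [Finset.sum_congr rfl fun j _ => h1 j, Finset.sum_comm]
  refine Finset.sum_congr rfl fun y _ => ?_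
  rw [Finset.sum_ite, Finset.sum_const, Finset.sum_const_zero, add_zero, nsmul_eq_mul]

open scoped Classical in
lemma mult_bound {V : Type} [Fintype V] (G : SimpleGraph V) (hG : G.Connected)
    (c : ℝ) (hc : 2 ≤ c)
    (hdbl : ∀ (x : V) (R : ℝ), 0 < R →
      ((gball G x (2 * R)).card : ℝ) ≤ c * ((gball G x R).card : ℝ))
    (r : ℝ) (hr : 0 < r) (M : ℕ) (x : Fin M → V)
    (hsep : ∀ i j : Fin M, i ≠ j → r < (G.dist (x i) (x j) : ℝ)) (y : V) :
    ((Finset.univ.filter fun j => y ∈ gball G (x j) (3 * r)).card : ℝ) ≤ c ^ 4 := by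
  set S := Finset.univ.filter fun j : Fin M => y ∈ gball G (x j) (3 * r) with hS
  set R0 := r / 2 with hR0
  have hc0 : (0:ℝ) < c := by linarith
  have hcnn : (0:ℝ) ≤ c := le_of_lt hc0
  have hmemS : ∀ j ∈ S, (G.dist (x j) y : ℝ) ≤ 3 * r := by
    intro j hj
    rw [hS, Finset.mem_filter] at hj
    exact (mem_gball G (x j) y (3*r)).1 hj.2
  have hsub : ∀ j ∈ S, gball G (x j) R0 ⊆ gball G y (4*r) := by
    intro j hj z hz
    rw [mem_gball] at hz ⊢
    have htri : G.dist y z ≤ G.dist y (x j) + G.dist (x j) z := hG.dist_triangle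
    have h1 : (G.dist y (x j) : ℝ) ≤ 3 * r := by rw [SimpleGraph.dist_comm]; exact hmemS j hj
    calc (G.dist y z : ℝ) ≤ (G.dist y (x j) : ℝ) + (G.dist (x j) z : ℝ) := by
          exact_mod_cast htri
      _ ≤ 3 * r + R0 := by linarith
      _ ≤ 4 * r := by rw [hR0]; linarith
  have hdisj : (S : Set (Fin M)).PairwiseDisjoint fun j => gball G (x j) R0 := by
    intro i hi j hj hij
    simp only [Function.onFun]
    rw [Finset.disjoint_left]
    intro z hzi hzj
    rw [mem_gball] at hzi hzj
    have htri : G.dist (x i) (x j) ≤ G.dist (x i) z + G.dist z (x j) := hG.dist_triangle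
    have h2 : (G.dist z (x j) : ℝ) ≤ R0 := by rw [SimpleGraph.dist_comm]; exact hzj
    have : (G.dist (x i) (x j) : ℝ) ≤ r := by
      calc (G.dist (x i) (x j) : ℝ) ≤ (G.dist (x i) z : ℝ) + (G.dist z (x j) : ℝ) := by
            exact_mod_cast htri
        _ ≤ R0 + R0 := by linarith
        _ = r := by rw [hR0]; ring
    exact absurd this (not_le.2 (hsep i j hij))
  have hbiU : S.biUnion (fun j => gball G (x j) R0) ⊆ gball G y (4*r) := by
    intro z hz
    rw [Finset.mem_biUnion] at hz
    obtain ⟨j, hj, hzj⟩ := hz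
    exact hsub j hj hzj
  have hcard : ∑ j ∈ S, (gball G (x j) R0).card ≤ (gball G y (4*r)).card := by
    rw [← Finset.card_biUnion hdisj]
    exact Finset.card_le_card hbiU
  have hdub : ∀ j ∈ S, ((gball G y (4*r)).card : ℝ) ≤ c ^ 4 * ((gball G (x j) R0).card : ℝ) := by
    intro j hj
    have h0 : gball G y (4*r) ⊆ gball G (x j) (2*(2*(2*(2*R0)))) := by
      intro z hz
      rw [mem_gball] at hz ⊢
      have htri : G.dist (x j) z ≤ G.dist (x j) y + G.dist y z := hG.dist_triangle
      calc (G.dist (x j) z : ℝ) ≤ (G.dist (x j) y : ℝ) + (G.dist y z : ℝ) := by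
            exact_mod_cast htri
        _ ≤ 3 * r + 4 * r := by linarith [hmemS j hj]
        _ ≤ 2*(2*(2*(2*R0))) := by rw [hR0]; linarith
    have d1 := hdbl (x j) (2*(2*(2*R0))) (by rw [hR0]; linarith)
    have d2 := hdbl (x j) (2*(2*R0)) (by rw [hR0]; linarith)
    have d3 := hdbl (x j) (2*R0) (by rw [hR0]; linarith)
    have d4 := hdbl (x j) R0 (by rw [hR0]; linarith)
    have hmono : ((gball G y (4*r)).card : ℝ)
        ≤ ((gball G (x j) (2*(2*(2*(2*R0))))).card : ℝ) := by
      exact_mod_cast Finset.card_le_card h0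
    calc ((gball G y (4*r)).card : ℝ)
        ≤ ((gball G (x j) (2*(2*(2*(2*R0))))).card : ℝ) := hmono
      _ ≤ c * ((gball G (x j) (2*(2*(2*R0)))).card : ℝ) := d1
      _ ≤ c * (c * ((gball G (x j) (2*(2*R0))).card : ℝ)) := by
          exact mul_le_mul_of_nonneg_left d2 hcnn
      _ ≤ c * (c * (c * ((gball G (x j) (2*R0)).card : ℝ))) := by
          exact mul_le_mul_of_nonneg_left (mul_le_mul_of_nonneg_left d3 hcnn) hcnn
      _ ≤ c * (c * (c * (c * ((gball G (x j) R0).card : ℝ)))) := by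
          exact mul_le_mul_of_nonneg_left
            (mul_le_mul_of_nonneg_left (mul_le_mul_of_nonneg_left d4 hcnn) hcnn) hcnn
      _ = c ^ 4 * ((gball G (x j) R0).card : ℝ) := by ring
  have hypos : (0:ℝ) < ((gball G y (4*r)).card : ℝ) := by
    have : y ∈ gball G y (4*r) := by
      rw [mem_gball, SimpleGraph.dist_self]
      push_cast
      linarith
    exact_mod_cast Finset.card_pos.2 ⟨y, this⟩
  have key : (S.card : ℝ) * ((gball G y (4*r)).card : ℝ)
      ≤ c ^ 4 * ((gball G y (4*r)).card : ℝ) := by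
    have h2 : ∑ j ∈ S, ((gball G (x j) R0).card : ℝ) ≤ ((gball G y (4*r)).card : ℝ) := by
      exact_mod_cast hcard
    have hc4 : (0:ℝ) ≤ c ^ 4 := by positivity
    calc (S.card : ℝ) * ((gball G y (4*r)).card : ℝ)
        = ∑ _j ∈ S, ((gball G y (4*r)).card : ℝ) := by rw [Finset.sum_const, nsmul_eq_mul]
      _ ≤ ∑ j ∈ S, c ^ 4 * ((gball G (x j) R0).card : ℝ) := Finset.sum_le_sum hdub
      _ = c ^ 4 * ∑ j ∈ S, ((gball G (x j) R0).card : ℝ) := by rw [Finset.mul_sum]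
      _ ≤ c ^ 4 * ((gball G y (4*r)).card : ℝ) := mul_le_mul_of_nonneg_left h2 hc4
  exact le_of_mul_le_mul_right key hypos

/-- if `x₁, …, x_M` are pairwise at distance `> δD` and the balls
`B(x_j, δD)` cover `V`, and `φ` is a nonzero eigenfunction with eigenvalue `λ ≠ 0` whose
averages over all the balls `B(x_j, δD)` vanish, then `1/λ ≤ C · c^A · P · (δD)²`. -/
theorem eigenvalue_lower_bound_vanishing_averages :
    ∃ A C : ℝ, 0 < A ∧ 0 < C ∧
      ∀ (V : Type) [Fintype V] (G : SimpleGraph V) (d : ℕ) (c P : ℝ),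
        1 ≤ d →
        (∀ x : V, (nbrs G x).card = d) →
        G.Connected →
        2 ≤ c →
        -- `c` is the doubling constant of `G`
        (∀ (x : V) (R : ℝ), 0 < R →
            ((gball G x (2 * R)).card : ℝ) ≤ c * ((gball G x R).card : ℝ)) →
        -- `P` is the Poincaré constant of `G`
        (∀ (x : V) (R : ℝ) (f : V → ℝ), 0 ≤ R →
            ∑ y ∈ gball G x R,
                (f y - (∑ z ∈ gball G x R, f z) / ((gball G x R).card : ℝ)) ^ 2
              ≤ P * R ^ 2 * ∑ y ∈ gball G x (3 * R), gradSq G d f y) →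
        ∀ δ : ℝ, 0 < δ →
        ∀ (M : ℕ) (x : Fin M → V),
          -- the points are pairwise at distance greater than `δ·D`
          (∀ i j : Fin M, i ≠ j →
              δ * (gdiam G : ℝ) < (G.dist (x i) (x j) : ℝ)) →
          -- the balls `B(x_j, δD)` cover `V`
          (∀ v : V, ∃ j : Fin M, v ∈ gball G (x j) (δ * (gdiam G : ℝ))) →
        ∀ (φ : V → ℝ) (lam : ℝ),
          φ ≠ 0 → lam ≠ 0 →
          -- `φ` is an eigenfunction of the discrete Laplacian with eigenvalue `lam`
          (∀ v : V, φ v - (1 / (d : ℝ)) * ∑ y ∈ nbrs G v, φ y = lam * φ v) →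
          -- the sums of `φ` over the balls vanish
          (∀ j : Fin M, ∑ y ∈ gball G (x j) (δ * (gdiam G : ℝ)), φ y = 0) →
          1 / lam ≤ C * c ^ A * P * (δ * (gdiam G : ℝ)) ^ 2 := by
  classical
  refine ⟨4, 1, by norm_num, by norm_num, ?_⟩
  intro V _ G d c P hd hreg hconn hc hdbl hpoin δ hδ M x hsep hcov φ lam hφ hlam heig hzero
  set D : ℝ := (gdiam G : ℝ) with hDdef
  set r : ℝ := δ * D with hrdef
  have hφv : ∃ v : V, φ v ≠ 0 := by
    by_contra h
    push_neg at h
    exact hφ (funext fun v => h v)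
  obtain ⟨v0, hv0⟩ := hφv
  have hd1 : 1 ≤ gdiam G := by
    have hne : (nbrs G v0).Nonempty := by
      rw [← Finset.card_pos, hreg v0]; exact hd
    obtain ⟨w, hw⟩ := hne
    have hadj : G.Adj v0 w := by
      rw [nbrs, Finset.mem_filter] at hw; exact hw.2
    have h1 : G.dist v0 w = 1 := SimpleGraph.dist_eq_one_iff_adj.2 hadj
    calc 1 = G.dist v0 w := h1.symm
      _ ≤ gdiam G := Finset.le_sup (f := fun p : V × V => G.dist p.1 p.2) (Finset.mem_univ (v0, w))
  have hr : 0 < r := by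
    rw [hrdef, hDdef]
    have h1 : (1:ℝ) ≤ (gdiam G : ℝ) := by exact_mod_cast hd1
    nlinarith
  have hT : 0 < ∑ v, φ v ^ 2 :=
    Finset.sum_pos' (fun v _ => sq_nonneg _) ⟨v0, Finset.mem_univ v0, by positivity⟩
  have hen : ∑ v, gradSq G d φ v = lam * ∑ v, φ v ^ 2 := energy_eq G d hd hreg φ lam heig
  have hgr : 0 ≤ ∑ v, gradSq G d φ v := Finset.sum_nonneg fun v _ => gradSq_nonneg G d φ v
  have hlam0 : 0 < lam := by
    rcases lt_trichotomy lam 0 with h | h | h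
    · nlinarith
    · exact absurd h hlam
    · exact h
  have step1 : ∑ v, φ v ^ 2 ≤ ∑ j, ∑ y ∈ gball G (x j) r, φ y ^ 2 := by
    rw [double_count G M x r (fun y => φ y ^ 2)]
    refine Finset.sum_le_sum fun y _ => ?_
    have h1 : 1 ≤ (Finset.univ.filter fun j => y ∈ gball G (x j) r).card := by
      obtain ⟨j, hj⟩ := hcov y
      exact Finset.card_pos.2 ⟨j, Finset.mem_filter.2 ⟨Finset.mem_univ j, hj⟩⟩
    have h2 : (1:ℝ) ≤ ((Finset.univ.filter fun j => y ∈ gball G (x j) r).card : ℝ) := by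
      exact_mod_cast h1
    nlinarith [sq_nonneg (φ y)]
  have step2 : ∀ j : Fin M, ∑ y ∈ gball G (x j) r, φ y ^ 2
      ≤ P * r ^ 2 * ∑ y ∈ gball G (x j) (3 * r), gradSq G d φ y := by
    intro j
    have h := hpoin (x j) r φ (le_of_lt hr)
    have hz : ∑ z ∈ gball G (x j) r, φ z = 0 := hzero j
    rw [hz] at h
    simpa using h
  set X := ∑ j, ∑ y ∈ gball G (x j) (3 * r), gradSq G d φ y with hXdef
  have step3 : X ≤ c ^ (4:ℕ) * (lam * ∑ v, φ v ^ 2) := by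
    rw [← hen, hXdef, double_count G M x (3*r) (gradSq G d φ), Finset.mul_sum]
    refine Finset.sum_le_sum fun y _ => ?_
    exact mul_le_mul_of_nonneg_right (mult_bound G hconn c hc hdbl r hr M x hsep y)
      (gradSq_nonneg G d φ y)
  have hX0 : 0 ≤ X :=
    Finset.sum_nonneg fun j _ => Finset.sum_nonneg fun y _ => gradSq_nonneg G d φ y
  have chain : ∑ j, ∑ y ∈ gball G (x j) r, φ y ^ 2 ≤ P * r ^ 2 * X := by
    calc ∑ j, ∑ y ∈ gball G (x j) r, φ y ^ 2
        ≤ ∑ j, P * r ^ 2 * ∑ y ∈ gball G (x j) (3 * r), gradSq G d φ y :=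
          Finset.sum_le_sum fun j _ => step2 j
      _ = P * r ^ 2 * X := by rw [hXdef, Finset.mul_sum]
  have hPr2 : 0 ≤ P * r ^ 2 := by
    by_contra h
    push_neg at h
    nlinarith [le_trans step1 chain]
  have final1 : ∑ v, φ v ^ 2 ≤ P * r ^ 2 * (c ^ (4:ℕ) * (lam * ∑ v, φ v ^ 2)) :=
    le_trans (le_trans step1 chain) (mul_le_mul_of_nonneg_left step3 hPr2)
  have hrw : P * r ^ 2 * (c ^ (4:ℕ) * (lam * ∑ v, φ v ^ 2))
      = (lam * (c ^ (4:ℕ) * P * r ^ 2)) * ∑ v, φ v ^ 2 := by ring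
  rw [hrw] at final1
  have final2 : 1 ≤ lam * (c ^ (4:ℕ) * P * r ^ 2) := by
    have := le_of_mul_le_mul_right (by linarith [final1] : 1 * ∑ v, φ v ^ 2
      ≤ (lam * (c ^ (4:ℕ) * P * r ^ 2)) * ∑ v, φ v ^ 2) hT
    linarith
  rw [div_le_iff₀ hlam0]
  have hc4 : c ^ (4:ℝ) = c ^ (4:ℕ) := by
    rw [show (4:ℝ) = ((4:ℕ):ℝ) by norm_num, Real.rpow_natCast]
  rw [hc4]
  have hring : 1 * c ^ (4:ℕ) * P * r ^ 2 * lam = lam * (c ^ (4:ℕ) * P * r ^ 2) := by ring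
  rw [hring]
  exact final2
end

section
/- Let X be a finite, connected, undirected graph with at least two vertices and doubling constant c_X ≥ 2. Then for every vertex x ∈ V and every real R with 10 ≤ R ≤ diam(X), one has (1 − 1/(2·c_X)) · |B(x,R)| ≥ |B(x, R/10)|. -/
open Finset

lemma dist_getVert_le_aux {V : Type} (G : SimpleGraph V) (hconn : G.Connected)
    {x z : V} (p : G.Walk x z) (n : ℕ) : G.dist x (p.getVert n) ≤ n := by
  induction p generalizing n with
  | @nil u =>
    rw [SimpleGraph.Walk.getVert_of_length_le _ (by simp : (SimpleGraph.Walk.nil : G.Walk u u).length ≤ n)]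
    simp [SimpleGraph.dist_self]
  | @cons u v w h q ih =>
    cases n with
    | zero => simp [SimpleGraph.Walk.getVert_zero]
    | succ n =>
      rw [SimpleGraph.Walk.getVert_cons_succ]
      calc G.dist u (q.getVert n) ≤ G.dist u v + G.dist v (q.getVert n) :=
            hconn.dist_triangle
        _ ≤ 1 + n := by
            have h1 : G.dist u v = 1 := SimpleGraph.dist_eq_one_iff_adj.mpr h
            have := ih n
            omega
        _ = n + 1 := by omega

lemma dist_getVert_ge_aux {V : Type} (G : SimpleGraph V)
    {x z : V} (p : G.Walk x z) (n : ℕ) : G.dist (p.getVert n) z ≤ p.length - n := by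
  induction p generalizing n with
  | @nil u =>
    rw [SimpleGraph.Walk.getVert_of_length_le _ (by simp : (SimpleGraph.Walk.nil : G.Walk u u).length ≤ n)]
    simp
  | @cons u v w h q ih =>
    cases n with
    | zero =>
      simpa using SimpleGraph.dist_le (SimpleGraph.Walk.cons h q)
    | succ n =>
      rw [SimpleGraph.Walk.getVert_cons_succ]
      have := ih n
      simp only [SimpleGraph.Walk.length_cons]
      omega

lemma exists_dist_eq' {V : Type} (G : SimpleGraph V) (hconn : G.Connected)
    (x z : V) (n : ℕ) (hn : n ≤ G.dist x z) : ∃ y, G.dist x y = n := by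
  obtain ⟨p, hp⟩ := hconn.exists_walk_length_eq_dist x z
  refine ⟨p.getVert n, ?_⟩
  have h1 := dist_getVert_le_aux G hconn p n
  have h2 := dist_getVert_ge_aux G p n
  have h3 : G.dist x z ≤ G.dist x (p.getVert n) + G.dist (p.getVert n) z :=
    hconn.dist_triangle
  omega

/-- in a finite connected graph with at least two vertices and doubling
constant `c ≥ 2`, for every vertex `x` and real `10 ≤ R ≤ diam(X)`,
`(1 - 1/(2c))·|B(x,R)| ≥ |B(x,R/10)|`. -/
theorem ball_measure_not_concentrated
    (V : Type) [Fintype V] (G : SimpleGraph V) (c : ℝ)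
    (hconn : G.Connected)
    (hcard : 2 ≤ Fintype.card V)
    (hc : 2 ≤ c)
    -- `c` is the doubling constant of `G`
    (hdoub : ∀ (x : V) (R : ℝ), 0 < R →
        ((gball G x (2 * R)).card : ℝ) ≤ c * ((gball G x R).card : ℝ))
    (x : V) (R : ℝ) (hR10 : 10 ≤ R) (hRD : R ≤ (gdiam G : ℝ)) :
    ((gball G x (R / 10)).card : ℝ) ≤ (1 - 1 / (2 * c)) * ((gball G x R).card : ℝ) := by
  have hc0 : (0:ℝ) < c := by linarith
  -- a pair attaining the diameter
  obtain ⟨p, -, hp⟩ := Finset.exists_mem_eq_sup (Finset.univ : Finset (V × V))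
    ⟨(x, x), Finset.mem_univ _⟩ (fun p : V × V => G.dist p.1 p.2)
  have hdiam : (gdiam G : ℝ) = (G.dist p.1 p.2 : ℝ) := by rw [gdiam, hp]
  -- the radius m
  set m : ℕ := ⌊R / 2⌋₊ with hm
  have hM1 : (m : ℝ) ≤ R / 2 := Nat.floor_le (by linarith)
  have hM2 : R / 2 < (m : ℝ) + 1 := Nat.lt_floor_add_one _
  have hM3 : 3 * R / 10 < (m : ℝ) := by linarith
  -- a vertex z with m ≤ dist x z
  have hz : m ≤ G.dist x p.1 ∨ m ≤ G.dist x p.2 := by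
    by_contra hcon
    push_neg at hcon
    have ht : G.dist p.1 p.2 ≤ G.dist p.1 x + G.dist x p.2 := hconn.dist_triangle
    have h1 : G.dist p.1 x = G.dist x p.1 := SimpleGraph.dist_comm
    have h2 : (G.dist p.1 p.2 : ℝ) ≥ R := by rw [← hdiam]; exact hRD
    have h3 : ((G.dist p.1 p.2 : ℕ) : ℝ) ≤ (G.dist x p.1 : ℝ) + (G.dist x p.2 : ℝ) := by
      push_cast; rw [← h1] at *; exact_mod_cast ht
    have h4 : (G.dist x p.1 : ℝ) < (m : ℝ) := by exact_mod_cast hcon.1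
    have h5 : (G.dist x p.2 : ℝ) < (m : ℝ) := by exact_mod_cast hcon.2
    linarith
  obtain ⟨z, hz⟩ : ∃ z, m ≤ G.dist x z := by
    rcases hz with h | h
    · exact ⟨p.1, h⟩
    · exact ⟨p.2, h⟩
  obtain ⟨y, hy⟩ := exists_dist_eq' G hconn x z m hz
  have hyR : (G.dist x y : ℝ) = (m : ℝ) := by exact_mod_cast congrArg Nat.cast hy
  -- the small radius s
  set s : ℝ := ((m : ℝ) + R / 10) / 2 with hs
  have hs0 : 0 < s := by positivity
  -- B(y,s) ⊆ B(x,R)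
  have A1 : gball G y s ⊆ gball G x R := by
    intro w hw
    rw [mem_gball] at hw ⊢
    have ht : G.dist x w ≤ G.dist x y + G.dist y w := hconn.dist_triangle
    have ht' : (G.dist x w : ℝ) ≤ (G.dist x y : ℝ) + (G.dist y w : ℝ) := by exact_mod_cast ht
    linarith
  -- disjointness
  have A2 : Disjoint (gball G x (R / 10)) (gball G y s) := by
    rw [Finset.disjoint_left]
    intro w hw1 hw2
    rw [mem_gball] at hw1 hw2
    have ht : G.dist x y ≤ G.dist x w + G.dist w y := hconn.dist_triangle
    have hcomm : G.dist w y = G.dist y w := SimpleGraph.dist_comm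
    have ht' : (G.dist x y : ℝ) ≤ (G.dist x w : ℝ) + (G.dist y w : ℝ) := by
      rw [← hcomm]; exact_mod_cast ht
    rw [hyR] at ht'
    linarith
  -- B(x,R/10) ⊆ B(y,2s)
  have A3 : gball G x (R / 10) ⊆ gball G y (2 * s) := by
    intro w hw
    rw [mem_gball] at hw ⊢
    have ht : G.dist y w ≤ G.dist y x + G.dist x w := hconn.dist_triangle
    have hcomm : G.dist y x = G.dist x y := SimpleGraph.dist_comm
    have ht' : (G.dist y w : ℝ) ≤ (G.dist x y : ℝ) + (G.dist x w : ℝ) := by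
      rw [← hcomm]; exact_mod_cast ht
    rw [hyR] at ht'
    have : 2 * s = (m : ℝ) + R / 10 := by rw [hs]; ring
    linarith
  -- small ball inside big ball
  have Asub : gball G x (R / 10) ⊆ gball G x R := by
    intro w hw
    rw [mem_gball] at hw ⊢
    linarith
  -- card inequalities
  have hcard1 : (gball G x (R / 10)).card + (gball G y s).card ≤ (gball G x R).card := by
    classical
    rw [← Finset.card_union_of_disjoint A2]
    exact Finset.card_le_card (Finset.union_subset Asub A1)
  have hcard2 : ((gball G x (R / 10)).card : ℝ) ≤ c * ((gball G y s).card : ℝ) := by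
    calc ((gball G x (R / 10)).card : ℝ) ≤ ((gball G y (2 * s)).card : ℝ) := by
          exact_mod_cast Finset.card_le_card A3
      _ ≤ c * ((gball G y s).card : ℝ) := hdoub y s hs0
  have hab : ((gball G x (R / 10)).card : ℝ) + ((gball G y s).card : ℝ)
      ≤ ((gball G x R).card : ℝ) := by exact_mod_cast hcard1
  set a : ℝ := ((gball G x (R / 10)).card : ℝ)
  set b : ℝ := ((gball G y s).card : ℝ)
  set A : ℝ := ((gball G x R).card : ℝ)
  have hb0 : 0 ≤ b := Nat.cast_nonneg _
  have key : 2 * c * a ≤ (2 * c - 1) * A := by nlinarith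
  have h2c : (0:ℝ) < 2 * c := by linarith
  have heq : (1 - 1 / (2 * c)) * A = ((2 * c - 1) * A) / (2 * c) := by
    field_simp
  rw [heq, le_div_iff₀ h2c]
  linarith
end
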